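/- Let Ω be a real symmetric positive definite qm×qm matrix that is q-block-tridiagonal (Ω_{i,j} = 0 whenever |i−j| > 1 as block indices), with condition number 𝒞. Let G = −(Ω_L + Ω_D)⁻¹ Ω_U be the Gauss–Seidel operator and C = Ω⁻¹. Then G C Gᵀ ⪯ β·C with β = 𝒞(1−𝒞⁻¹)² / (1 + 𝒞(1−𝒞⁻¹)²). -/

import Mathlib

open Matrix

/-- Block strictly-lower-triangular part (with respect to `q × q` blocks). -/
def Matrix.blkLower {m q : ℕ} (Ω : Matrix (Fin m × Fin q) (Fin m × Fin q) ℝ) :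
    Matrix (Fin m × Fin q) (Fin m × Fin q) ℝ :=
  Matrix.of fun p r => if r.1 < p.1 then Ω p r else 0

/-- Block-diagonal part (with respect to `q × q` blocks). -/
def Matrix.blkDiag {m q : ℕ} (Ω : Matrix (Fin m × Fin q) (Fin m × Fin q) ℝ) :
    Matrix (Fin m × Fin q) (Fin m × Fin q) ℝ :=
  Matrix.of fun p r => if p.1 = r.1 then Ω p r else 0

/-- Block strictly-upper-triangular part (with respect to `q × q` blocks). -/
def Matrix.blkUpper {m q : ℕ} (Ω : Matrix (Fin m × Fin q) (Fin m × Fin q) ℝ) :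
    Matrix (Fin m × Fin q) (Fin m × Fin q) ℝ :=
  Matrix.of fun p r => if p.1 < r.1 then Ω p r else 0

namespace GSaux

set_option linter.unusedSectionVars false

section general

variable {n : Type*} [Fintype n] [DecidableEq n]

lemma ctr (A : Matrix n n ℝ) : Aᴴ = Aᵀ := by
  ext p r; simp [conjTranspose_apply]

lemma psd_smul {A : Matrix n n ℝ} (hA : A.PosSemidef) {c : ℝ} (hc : 0 ≤ c) :
    (c • A).PosSemidef := by
  exact hA.smul hc

lemma inv_bound {Ω : Matrix n n ℝ} (hΩ : Ω.PosDef) {a : ℝ} (ha : 0 < a)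
    (hmin : (Ω - a • (1 : Matrix n n ℝ)).PosSemidef) :
    (a⁻¹ • (1 : Matrix n n ℝ) - Ω⁻¹).PosSemidef := by
  have hdet : IsUnit Ω.det := (Matrix.isUnit_iff_isUnit_det Ω).mp hΩ.isUnit
  have hO1 : Ω * Ω⁻¹ = 1 := mul_nonsing_inv Ω hdet
  have hO2 : Ω⁻¹ * Ω = 1 := nonsing_inv_mul Ω hdet
  have hsym : Ωᵀ = Ω := by rw [← ctr]; exact hΩ.1.eq
  have hinvT : Ω⁻¹ᵀ = Ω⁻¹ := by rw [transpose_nonsing_inv, hsym]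
  have hPP : ((Ω - a • 1) * (Ω - a • 1)).PosSemidef := by
    have h := Matrix.posSemidef_self_mul_conjTranspose (Ω - a • (1 : Matrix n n ℝ))
    rwa [hmin.1] at h
  have hinner : (a⁻¹ • (((Ω - a•1) * (Ω - a•1)) + a • (Ω - a•1))).PosSemidef :=
    psd_smul (hPP.add (psd_smul hmin ha.le)) (inv_nonneg.mpr ha.le)
  have hid : a⁻¹ • (1 : Matrix n n ℝ) - Ω⁻¹
      = Ω⁻¹ * (a⁻¹ • (((Ω - a•1) * (Ω - a•1)) + a • (Ω - a•1))) * Ω⁻¹ᴴ := by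
    rw [ctr, hinvT]
    have h1 : ((Ω - a•1) * (Ω - a•1)) + a • (Ω - a•1) = Ω * Ω - a • Ω := by
      simp only [Matrix.sub_mul, Matrix.mul_sub, smul_mul_assoc, mul_smul_comm,
        Matrix.mul_one, Matrix.one_mul]
      module
    rw [h1]
    have h2 : Ω⁻¹ * (a⁻¹ • (Ω * Ω - a • Ω)) * Ω⁻¹
        = a⁻¹ • (Ω⁻¹ * (Ω * Ω - a • Ω) * Ω⁻¹) := by
      simp only [mul_smul_comm, smul_mul_assoc]
    rw [h2]
    have h3 : Ω⁻¹ * (Ω * Ω - a • Ω) * Ω⁻¹ = 1 - a • Ω⁻¹ := by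
      simp only [Matrix.mul_sub, Matrix.sub_mul, mul_smul_comm, smul_mul_assoc,
        Matrix.mul_assoc, hO1, Matrix.mul_one]
      rw [hO2]
    rw [h3, smul_sub, smul_smul, inv_mul_cancel₀ ha.ne', one_smul]
  rw [hid]
  exact hinner.mul_mul_conjTranspose_same Ω⁻¹

lemma quad_bound {Ω : Matrix n n ℝ} {a b : ℝ}
    (hmin : (Ω - a • (1 : Matrix n n ℝ)).PosSemidef)
    (hmax : (b • (1 : Matrix n n ℝ) - Ω).PosSemidef) :
    ((a + b) • Ω - Ω * Ω - (a * b) • (1 : Matrix n n ℝ)).PosSemidef := by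
  obtain ⟨S, hSS, hSherm⟩ : ∃ S : Matrix n n ℝ, S * S = b • (1 : Matrix n n ℝ) - Ω ∧ Sᴴ = S := by
    open scoped MatrixOrder in
    exact ⟨CFC.sqrt _, CFC.sqrt_mul_sqrt_self _ hmax.nonneg, (CFC.sqrt_nonneg _).posSemidef.1⟩
  have hid : (a + b) • Ω - Ω * Ω - (a * b) • (1 : Matrix n n ℝ)
      = S * (Ω - a • 1) * Sᴴ := by
    rw [hSherm]
    have h1 : Ω - a • (1 : Matrix n n ℝ) = (b - a) • (1 : Matrix n n ℝ) - S * S := by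
      rw [hSS]; module
    rw [h1]
    symm
    calc S * ((b - a) • (1 : Matrix n n ℝ) - S * S) * S
        = (b - a) • (S * S) - (S * S) * (S * S) := by
          simp only [Matrix.mul_sub, Matrix.sub_mul, mul_smul_comm, smul_mul_assoc,
            Matrix.mul_one, Matrix.mul_assoc]
      _ = (b - a) • (b • 1 - Ω) - (b • 1 - Ω) * (b • (1 : Matrix n n ℝ) - Ω) := by
          rw [hSS]
      _ = (a + b) • Ω - Ω * Ω - (a * b) • (1 : Matrix n n ℝ) := by
          simp only [Matrix.mul_sub, Matrix.sub_mul, mul_smul_comm, smul_mul_assoc,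
            Matrix.mul_one, Matrix.one_mul, smul_sub, smul_smul]
          module
  rw [hid]
  exact hmin.mul_mul_conjTranspose_same S

lemma diag_poly_bound {D : Matrix n n ℝ} (hD : D.PosSemidef) {a b s : ℝ}
    (ha : 0 < a) (hb : 0 < b) (hs : a * s = (b - a)^2 / b) :
    (D * D - (a + b - a * s) • D + (a * b) • (1 : Matrix n n ℝ)).PosSemidef := by
  set r := Real.sqrt (a * b) with hr
  have hr2 : r * r = a * b := Real.mul_self_sqrt (by positivity)
  have hDherm : (D - r • (1 : Matrix n n ℝ))ᴴ = D - r • 1 := by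
    rw [conjTranspose_sub, hD.1, conjTranspose_smul]
    simp
  have hc2 : 0 ≤ a * s - (Real.sqrt b - Real.sqrt a)^2 := by
    rw [hs]
    set u := Real.sqrt a with hu
    set v := Real.sqrt b with hv
    have hu2 : u^2 = a := Real.sq_sqrt ha.le
    have hv2 : v^2 = b := Real.sq_sqrt hb.le
    have hu0 : 0 ≤ u := Real.sqrt_nonneg a
    have hv0 : 0 < v := Real.sqrt_pos.mpr hb
    rw [sub_nonneg, le_div_iff₀ hb]
    nlinarith [mul_nonneg (sq_nonneg (v - u)) (by positivity : (0:ℝ) ≤ 2*u*v + u^2)]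
  have hid : D * D - (a + b - a * s) • D + (a * b) • (1 : Matrix n n ℝ)
      = (D - r • 1) * (D - r • 1)ᴴ
        + (a * s - (Real.sqrt b - Real.sqrt a)^2) • D := by
    rw [hDherm]
    have hss : (Real.sqrt b - Real.sqrt a)^2 = b + a - 2 * r := by
      have : Real.sqrt a * Real.sqrt b = r := (Real.sqrt_mul ha.le b).symm
      nlinarith [Real.sq_sqrt ha.le, Real.sq_sqrt hb.le]
    rw [hss, ← hr2]
    simp only [Matrix.sub_mul, Matrix.mul_sub, smul_mul_assoc, mul_smul_comm,
      Matrix.mul_one, Matrix.one_mul, smul_smul]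
    module
  rw [hid]
  exact (Matrix.posSemidef_self_mul_conjTranspose _).add (psd_smul hD hc2)

end general

section blocks

variable {m q : ℕ}

lemma blkDiag_add (A B : Matrix (Fin m × Fin q) (Fin m × Fin q) ℝ) :
    (A + B).blkDiag = A.blkDiag + B.blkDiag := by
  ext p r; by_cases h : p.1 = r.1 <;> simp [Matrix.blkDiag, h]

lemma blkDiag_sub (A B : Matrix (Fin m × Fin q) (Fin m × Fin q) ℝ) :
    (A - B).blkDiag = A.blkDiag - B.blkDiag := by
  ext p r; by_cases h : p.1 = r.1 <;> simp [Matrix.blkDiag, h]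

lemma blkDiag_smul (c : ℝ) (A : Matrix (Fin m × Fin q) (Fin m × Fin q) ℝ) :
    (c • A).blkDiag = c • A.blkDiag := by
  ext p r; by_cases h : p.1 = r.1 <;> simp [Matrix.blkDiag, h]

lemma blkDiag_one : (1 : Matrix (Fin m × Fin q) (Fin m × Fin q) ℝ).blkDiag = 1 := by
  ext p r
  by_cases h : p = r
  · subst h; simp [Matrix.blkDiag, one_apply_eq]
  · by_cases h2 : p.1 = r.1 <;> simp [Matrix.blkDiag, h2, one_apply_ne h]

lemma blk_decomp (Ω : Matrix (Fin m × Fin q) (Fin m × Fin q) ℝ) :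
    Ω.blkLower + Ω.blkDiag + Ω.blkUpper = Ω := by
  ext p r
  simp only [Matrix.blkLower, Matrix.blkDiag, Matrix.blkUpper, Matrix.add_apply, of_apply]
  rcases lt_trichotomy p.1 r.1 with h | h | h
  · rw [if_neg (asymm h), if_neg h.ne, if_pos h]; ring
  · rw [if_neg (by simp [h]), if_pos h, if_neg (by simp [h])]; ring
  · rw [if_pos h, if_neg (by exact fun e => absurd e (ne_of_gt h)), if_neg (asymm h)]; ring

lemma blkUpper_transpose {Ω : Matrix (Fin m × Fin q) (Fin m × Fin q) ℝ} (hsym : Ωᵀ = Ω) :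
    Ω.blkUpperᵀ = Ω.blkLower := by
  ext p r
  have : Ω r p = Ω p r := by
    have h2 := congrFun (congrFun hsym r) p
    simpa using h2.symm
  simp only [Matrix.blkUpper, Matrix.blkLower, transpose_apply, of_apply, this]

lemma blkDiag_eq_self {X : Matrix (Fin m × Fin q) (Fin m × Fin q) ℝ}
    (h : ∀ p r : Fin m × Fin q, p.1 ≠ r.1 → X p r = 0) :
    X.blkDiag = X := by
  ext p r
  simp only [Matrix.blkDiag, of_apply]
  split_ifs with hpr
  · rfl
  · exact (h p r hpr).symm

lemma blkDiag_mul_eq_zero {A B : Matrix (Fin m × Fin q) (Fin m × Fin q) ℝ}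
    (h : ∀ p k r : Fin m × Fin q, p.1 = r.1 → A p k = 0 ∨ B k r = 0) :
    (A * B).blkDiag = 0 := by
  ext p r
  simp only [Matrix.blkDiag, of_apply, Matrix.zero_apply]
  split_ifs with hpr
  · rw [mul_apply]
    refine Finset.sum_eq_zero fun k _ => ?_
    rcases h p k r hpr with h' | h' <;> simp [h']
  · rfl

lemma blkDiag_eq_sum (M : Matrix (Fin m × Fin q) (Fin m × Fin q) ℝ) :
    M.blkDiag = ∑ i : Fin m,
      (diagonal fun p : Fin m × Fin q => if p.1 = i then (1:ℝ) else 0) * M *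
      (diagonal fun p : Fin m × Fin q => if p.1 = i then (1:ℝ) else 0) := by
  ext p r
  rw [Matrix.sum_apply]
  simp only [mul_diagonal, diagonal_mul, Matrix.blkDiag, of_apply]
  by_cases h : p.1 = r.1
  · rw [Finset.sum_eq_single p.1]
    · simp [h]
    · intro i _ hi; simp [Ne.symm hi]
    · simp
  · rw [Finset.sum_eq_zero]; · simp [h]
    intro i _
    by_cases hp : p.1 = i
    · have : ¬ r.1 = i := fun hr => h (hp.trans hr.symm)
      simp [this]
    · simp [hp]

lemma blkDiag_posSemidef {M : Matrix (Fin m × Fin q) (Fin m × Fin q) ℝ} (hM : M.PosSemidef) :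
    M.blkDiag.PosSemidef := by
  rw [blkDiag_eq_sum]
  refine Finset.sum_induction _ _ (fun a b ha hb => ha.add hb) .zero ?_
  intro i _
  have h := hM.mul_mul_conjTranspose_same
    (diagonal fun p : Fin m × Fin q => if p.1 = i then (1:ℝ) else 0)
  rwa [ctr, diagonal_transpose] at h

section supports

variable {Ω : Matrix (Fin m × Fin q) (Fin m × Fin q) ℝ}
  (htri : ∀ p r : Fin m × Fin q, 1 < |(p.1 : ℤ) - (r.1 : ℤ)| → Ω p r = 0)

lemma Usup : ∀ p k : Fin m × Fin q, Ω.blkUpper p k ≠ 0 → p.1 < k.1 := by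
  intro p k h
  by_contra hc
  simp [Matrix.blkUpper, hc] at h

include htri in
lemma Usup2 : ∀ p k : Fin m × Fin q, Ω.blkUpper p k ≠ 0 → (k.1 : ℤ) = (p.1 : ℤ) + 1 := by
  intro p k h
  have h1 : p.1 < k.1 := Usup p k h
  by_contra hc
  have : Ω p k = 0 := htri p k (by
    have := Fin.lt_def.mp h1; rw [lt_abs]; omega)
  simp [Matrix.blkUpper, this] at h

lemma Wsup : ∀ p k : Fin m × Fin q, Ω.blkLower p k ≠ 0 → k.1 < p.1 := by
  intro p k h
  by_contra hc
  simp [Matrix.blkLower, hc] at h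

include htri in
lemma Wsup2 : ∀ p k : Fin m × Fin q, Ω.blkLower p k ≠ 0 → (p.1 : ℤ) = (k.1 : ℤ) + 1 := by
  intro p k h
  have h1 : k.1 < p.1 := Wsup p k h
  by_contra hc
  have : Ω p k = 0 := htri p k (by
    have := Fin.lt_def.mp h1; rw [lt_abs]; omega)
  simp [Matrix.blkLower, this] at h

lemma Dsup : ∀ p k : Fin m × Fin q, Ω.blkDiag p k ≠ 0 → p.1 = k.1 := by
  intro p k h
  by_contra hc
  simp [Matrix.blkDiag, hc] at h

include htri in
lemma star_identity :
    (Ω.blkDiag * Ω.blkDiag).blkDiag = Ω.blkDiag * Ω.blkDiag ∧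
    (Ω.blkUpper * Ω.blkLower).blkDiag = Ω.blkUpper * Ω.blkLower ∧
    (Ω * Ω).blkDiag = (Ω.blkLower * Ω.blkUpper).blkDiag + Ω.blkDiag * Ω.blkDiag
      + Ω.blkUpper * Ω.blkLower := by
  set W := Ω.blkLower
  set D := Ω.blkDiag
  set U := Ω.blkUpper
  have hDD : (D * D).blkDiag = D * D := by
    refine blkDiag_eq_self fun p r hpr => ?_
    rw [mul_apply]
    refine Finset.sum_eq_zero fun k _ => ?_
    by_cases h1 : D p k = 0
    · simp [h1]
    by_cases h2 : D k r = 0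
    · simp [h2]
    exact absurd ((Dsup p k h1).trans (Dsup k r h2)) hpr
  have hUW : (U * W).blkDiag = U * W := by
    refine blkDiag_eq_self fun p r hpr => ?_
    rw [mul_apply]
    refine Finset.sum_eq_zero fun k _ => ?_
    by_cases h1 : U p k = 0
    · simp [h1]
    by_cases h2 : W k r = 0
    · simp [h2]
    have e1 := Usup2 htri p k h1
    have e2 := Wsup2 htri k r h2
    exact absurd (by
      have : (p.1 : ℤ) = (r.1 : ℤ) := by omega
      exact Fin.val_injective (by exact_mod_cast this)) hpr
  refine ⟨hDD, hUW, ?_⟩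
  have hdec : Ω = W + D + U := (blk_decomp Ω).symm
  have z1 : (W * W).blkDiag = 0 := blkDiag_mul_eq_zero fun p k r hpr => by
    by_cases h1 : W p k = 0
    · exact Or.inl h1
    refine Or.inr ?_
    by_contra h2
    have a1 := Fin.lt_def.mp (Wsup p k h1)
    have a2 := Fin.lt_def.mp (Wsup k r h2)
    have : (r.1 : ℕ) = p.1 := congrArg Fin.val hpr.symm
    omega
  have z2 : (W * D).blkDiag = 0 := blkDiag_mul_eq_zero fun p k r hpr => by
    by_cases h1 : W p k = 0
    · exact Or.inl h1
    refine Or.inr ?_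
    by_contra h2
    have a1 := Fin.lt_def.mp (Wsup p k h1)
    have a2 : (k.1 : ℕ) = r.1 := congrArg Fin.val (Dsup k r h2)
    have : (r.1 : ℕ) = p.1 := congrArg Fin.val hpr.symm
    omega
  have z3 : (D * W).blkDiag = 0 := blkDiag_mul_eq_zero fun p k r hpr => by
    by_cases h1 : D p k = 0
    · exact Or.inl h1
    refine Or.inr ?_
    by_contra h2
    have a1 : (p.1 : ℕ) = k.1 := congrArg Fin.val (Dsup p k h1)
    have a2 := Fin.lt_def.mp (Wsup k r h2)
    have : (r.1 : ℕ) = p.1 := congrArg Fin.val hpr.symm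
    omega
  have z4 : (D * U).blkDiag = 0 := blkDiag_mul_eq_zero fun p k r hpr => by
    by_cases h1 : D p k = 0
    · exact Or.inl h1
    refine Or.inr ?_
    by_contra h2
    have a1 : (p.1 : ℕ) = k.1 := congrArg Fin.val (Dsup p k h1)
    have a2 := Fin.lt_def.mp (Usup k r h2)
    have : (r.1 : ℕ) = p.1 := congrArg Fin.val hpr.symm
    omega
  have z5 : (U * D).blkDiag = 0 := blkDiag_mul_eq_zero fun p k r hpr => by
    by_cases h1 : U p k = 0
    · exact Or.inl h1
    refine Or.inr ?_
    by_contra h2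
    have a1 := Fin.lt_def.mp (Usup p k h1)
    have a2 : (k.1 : ℕ) = r.1 := congrArg Fin.val (Dsup k r h2)
    have : (r.1 : ℕ) = p.1 := congrArg Fin.val hpr.symm
    omega
  have z6 : (U * U).blkDiag = 0 := blkDiag_mul_eq_zero fun p k r hpr => by
    by_cases h1 : U p k = 0
    · exact Or.inl h1
    refine Or.inr ?_
    by_contra h2
    have a1 := Fin.lt_def.mp (Usup p k h1)
    have a2 := Fin.lt_def.mp (Usup k r h2)
    have : (r.1 : ℕ) = p.1 := congrArg Fin.val hpr.symm
    omega
  calc (Ω * Ω).blkDiag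
      = ((W + D + U) * (W + D + U)).blkDiag := by rw [← hdec]
    _ = (W*W).blkDiag + (W*D).blkDiag + (W*U).blkDiag + ((D*W).blkDiag + (D*D).blkDiag
          + (D*U).blkDiag) + ((U*W).blkDiag + (U*D).blkDiag + (U*U).blkDiag) := by
        simp only [add_mul, mul_add, blkDiag_add]; abel
    _ = (W * U).blkDiag + D * D + U * W := by
        rw [z1, z2, z3, z4, z5, z6, hDD, hUW]; abel

end supports

end blocks

end GSaux

/-- if `Ω` is symmetric positive definite and `q`-block-tridiagonal with
extreme eigenvalues `λ_min ≤ λ_max` (Loewner order) and condition number `𝒞 = λ_max/λ_min`,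
then the Gauss–Seidel operator `G = -(Ω_L + Ω_D)⁻¹ Ω_U` and `C = Ω⁻¹` satisfy
`G C Gᵀ ⪯ β C` with `β = 𝒞(1 - 𝒞⁻¹)² / (1 + 𝒞(1 - 𝒞⁻¹)²)`. -/
theorem gaussSeidel_contraction_of_blockTridiagonal_precision
    {m q : ℕ} (Ω : Matrix (Fin m × Fin q) (Fin m × Fin q) ℝ) (hΩ : Ω.PosDef)
    (htri : ∀ p r : Fin m × Fin q, 1 < |(p.1 : ℤ) - (r.1 : ℤ)| → Ω p r = 0)
    (lmin lmax : ℝ) (hlmin : 0 < lmin)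
    (hmin : (Ω - lmin • (1 : Matrix (Fin m × Fin q) (Fin m × Fin q) ℝ)).PosSemidef)
    (hmax : ((lmax • (1 : Matrix (Fin m × Fin q) (Fin m × Fin q) ℝ)) - Ω).PosSemidef)
    (hInv : IsUnit (Ω.blkLower + Ω.blkDiag)) :
    ((((lmax / lmin) * (1 - (lmax / lmin)⁻¹) ^ 2) /
          (1 + (lmax / lmin) * (1 - (lmax / lmin)⁻¹) ^ 2)) • Ω⁻¹ -
        (-((Ω.blkLower + Ω.blkDiag)⁻¹ * Ω.blkUpper)) * Ω⁻¹ *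
          (-((Ω.blkLower + Ω.blkDiag)⁻¹ * Ω.blkUpper))ᵀ).PosSemidef := by
  rcases isEmpty_or_nonempty (Fin m × Fin q) with hE | hNE
  · have h0 : ((((lmax / lmin) * (1 - (lmax / lmin)⁻¹) ^ 2) /
          (1 + (lmax / lmin) * (1 - (lmax / lmin)⁻¹) ^ 2)) • Ω⁻¹ -
        (-((Ω.blkLower + Ω.blkDiag)⁻¹ * Ω.blkUpper)) * Ω⁻¹ *
          (-((Ω.blkLower + Ω.blkDiag)⁻¹ * Ω.blkUpper))ᵀ)
        = (0 : Matrix (Fin m × Fin q) (Fin m × Fin q) ℝ) := by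
      ext p r; exact hE.elim p
    rw [h0]
    exact Matrix.PosSemidef.zero
  classical
  have hsym : Ωᵀ = Ω := by rw [← GSaux.ctr]; exact hΩ.1.eq
  -- lmin ≤ lmax, 0 < lmax
  obtain ⟨x0⟩ := hNE
  have hab : lmin ≤ lmax := by
    have hsum0 : (Ω - lmin • (1 : Matrix (Fin m × Fin q) (Fin m × Fin q) ℝ))
        + (lmax • 1 - Ω) = (lmax - lmin) • (1 : Matrix (Fin m × Fin q) (Fin m × Fin q) ℝ) := by
      module
    have hps := (hmin.add hmax).dotProduct_mulVec_nonneg (Pi.single x0 1)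
    rw [hsum0, smul_mulVec, one_mulVec, dotProduct_smul] at hps
    have hdot : star (Pi.single x0 (1:ℝ)) ⬝ᵥ Pi.single x0 (1:ℝ) = 1 := by
      simp [dotProduct, Pi.single_apply]
    rw [hdot, smul_eq_mul, mul_one] at hps
    linarith
  have hb : 0 < lmax := lt_of_lt_of_le hlmin hab
  set s := (lmax - lmin)^2/(lmin*lmax) with hs_def
  have hnum : (lmax / lmin) * (1 - (lmax / lmin)⁻¹) ^ 2 = s := by
    rw [hs_def]; field_simp
  rw [hnum]
  have hs0 : 0 ≤ s := by rw [hs_def]; positivity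
  have h1s : 0 < 1 + s := by linarith
  set W := Ω.blkLower with hW_def
  set D := Ω.blkDiag with hD_def
  set U := Ω.blkUpper with hU_def
  set L := W + D with hL_def
  have hWU : Uᵀ = W := GSaux.blkUpper_transpose hsym
  have hdet : IsUnit Ω.det := (Matrix.isUnit_iff_isUnit_det Ω).mp hΩ.isUnit
  have hO1 : Ω * Ω⁻¹ = 1 := mul_nonsing_inv Ω hdet
  have hO2 : Ω⁻¹ * Ω = 1 := nonsing_inv_mul Ω hdet
  have hdetL : IsUnit L.det := (Matrix.isUnit_iff_isUnit_det L).mp hInv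
  have hL1 : L⁻¹ * L = 1 := nonsing_inv_mul L hdetL
  have hLt : Lᵀ * L⁻¹ᵀ = 1 := by rw [← transpose_mul, hL1, transpose_one]
  have hdec : W + D + U = Ω := GSaux.blk_decomp Ω
  have hLe : L = Ω - U := by rw [hL_def, ← hdec]; abel
  have hLTform : Lᵀ = Ω - W := by rw [hLe, transpose_sub, hsym, hWU]
  have hDform : D = Ω - W - U := by rw [← hdec]; abel
  have E2 : L * Ω⁻¹ * Lᵀ = D + U * Ω⁻¹ * W := by
    rw [hLTform, hLe, hDform]
    simp only [Matrix.sub_mul, Matrix.mul_sub]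
    rw [hO1, Matrix.mul_assoc U, hO2, Matrix.one_mul, Matrix.one_mul, Matrix.mul_one]
    abel
  obtain ⟨hDD, hUWd, hstar⟩ := GSaux.star_identity htri
  have hUWeq : U * W = (Ω * Ω).blkDiag - (W * U).blkDiag - D * D := by
    rw [hstar]; abel
  -- PSD ingredients
  have hK1 : (lmin⁻¹ • (1 : Matrix (Fin m × Fin q) (Fin m × Fin q) ℝ) - Ω⁻¹).PosSemidef :=
    GSaux.inv_bound hΩ hlmin hmin
  have hK2 : ((lmin+lmax) • Ω - Ω * Ω
      - (lmin*lmax) • (1 : Matrix (Fin m × Fin q) (Fin m × Fin q) ℝ)).PosSemidef :=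
    GSaux.quad_bound hmin hmax
  have hK2d : ((lmin+lmax) • D - (Ω*Ω).blkDiag
      - (lmin*lmax) • (1 : Matrix (Fin m × Fin q) (Fin m × Fin q) ℝ)).PosSemidef := by
    have h := GSaux.blkDiag_posSemidef hK2
    rwa [GSaux.blkDiag_sub, GSaux.blkDiag_sub, GSaux.blkDiag_smul, GSaux.blkDiag_smul,
      GSaux.blkDiag_one] at h
  have hDpsd : D.PosSemidef := GSaux.blkDiag_posSemidef hΩ.posSemidef
  have hWUpsd : ((W * U).blkDiag).PosSemidef := by
    have h := Matrix.posSemidef_conjTranspose_mul_self U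
    rw [GSaux.ctr, hWU] at h
    exact GSaux.blkDiag_posSemidef h
  have hasb : lmin * s = (lmax - lmin)^2 / lmax := by
    rw [hs_def]; field_simp
  have hPD : (D * D - (lmin + lmax - lmin * s) • D
      + (lmin*lmax) • (1 : Matrix (Fin m × Fin q) (Fin m × Fin q) ℝ)).PosSemidef :=
    GSaux.diag_poly_bound hDpsd hlmin hb hasb
  have hsum : ((lmin+lmax) • D - (Ω*Ω).blkDiag
        - (lmin*lmax) • (1 : Matrix (Fin m × Fin q) (Fin m × Fin q) ℝ)) + (W*U).blkDiag
      + (D * D - (lmin + lmax - lmin * s) • D + (lmin*lmax) • 1)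
      = (lmin * s) • D - U * W := by
    rw [hUWeq]; module
  have hNpsd : (s • D - U * Ω⁻¹ * W).PosSemidef := by
    have hUK1W : (U * (lmin⁻¹ • (1 : Matrix (Fin m × Fin q) (Fin m × Fin q) ℝ) - Ω⁻¹)
        * W).PosSemidef := by
      have h := hK1.mul_mul_conjTranspose_same U
      rwa [GSaux.ctr, hWU] at h
    have hrest := GSaux.psd_smul ((hK2d.add hWUpsd).add hPD) (inv_nonneg.mpr hlmin.le)
    have hexp : s • D - U * Ω⁻¹ * W
        = U * (lmin⁻¹ • (1 : Matrix (Fin m × Fin q) (Fin m × Fin q) ℝ) - Ω⁻¹) * W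
          + lmin⁻¹ • ((((lmin+lmax) • D - (Ω*Ω).blkDiag - (lmin*lmax) • 1) + (W*U).blkDiag)
            + (D * D - (lmin + lmax - lmin * s) • D + (lmin*lmax) • 1)) := by
      rw [hsum]
      have hco : lmin⁻¹ • ((lmin * s) • D - U * W) = s • D - lmin⁻¹ • (U * W) := by
        rw [smul_sub, smul_smul, show lmin⁻¹ * (lmin * s) = s by field_simp]
      rw [hco]
      simp only [Matrix.mul_sub, Matrix.sub_mul, mul_smul_comm, smul_mul_assoc,
        Matrix.mul_one, Matrix.one_mul]
      abel
    rw [hexp]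
    exact hUK1W.add hrest
  -- final conjugation
  have hcanc : L⁻¹ * (L * Ω⁻¹ * Lᵀ) * L⁻¹ᵀ = Ω⁻¹ := by
    calc L⁻¹ * (L * Ω⁻¹ * Lᵀ) * L⁻¹ᵀ = L⁻¹ * (L * (Ω⁻¹ * (Lᵀ * L⁻¹ᵀ))) := by
          simp only [Matrix.mul_assoc]
      _ = Ω⁻¹ := by rw [hLt, Matrix.mul_one, ← Matrix.mul_assoc, hL1, Matrix.one_mul]
  have hZ : (-(L⁻¹ * U)) * Ω⁻¹ * (-(L⁻¹ * U))ᵀ = L⁻¹ * (U * Ω⁻¹ * W) * L⁻¹ᵀ := by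
    rw [transpose_neg, transpose_mul, hWU]
    simp only [neg_mul, mul_neg, neg_neg, Matrix.mul_assoc]
  have hD2 : s • D - U * Ω⁻¹ * W = s • (L * Ω⁻¹ * Lᵀ) - (1+s) • (U * Ω⁻¹ * W) := by
    rw [E2]; module
  have hgoal_eq : (s/(1+s)) • Ω⁻¹ - (-(L⁻¹ * U)) * Ω⁻¹ * (-(L⁻¹ * U))ᵀ
      = L⁻¹ * ((1/(1+s)) • (s • D - U * Ω⁻¹ * W)) * L⁻¹ᴴ := by
    rw [GSaux.ctr, hZ, hD2]
    simp only [smul_sub, Matrix.mul_sub, Matrix.sub_mul, mul_smul_comm, smul_mul_assoc,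
      smul_smul]
    rw [hcanc]
    match_scalars <;> field_simp
  rw [hgoal_eq]
  exact (GSaux.psd_smul hNpsd (by positivity)).mul_mul_conjTranspose_same L⁻¹
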